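/- Consider the four real symmetric 3×3 matrices D = diag(1,1,−2), D₂ = diag(1,−2,1), M1 = [[1,0,0],[0,−1/2,−3/2],[0,−3/2,−1/2]] and M2 = [[−1/2,0,−3/2],[0,1,0],[−3/2,0,−1/2]]. Then: (a) these four matrices are linearly independent over ℝ; (b) for every real number t, each of the matrices t•D, t•D₂, t•M1, t•M2 has trace zero and a multiple eigenvalue, i.e. the four lines through zero spanned by them lie entirely in M₀. (This is the key fact showing that zero is a singular point of the cone M₀: a neighborhood of a regular point of the 3-dimensional surface M₀ could not contain four lines with linearly independent directions.) -/

import Mathlib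

open Matrix Polynomial

lemma eval_charpoly' (A : Matrix (Fin 3) (Fin 3) ℝ) (r : ℝ) :
    A.charpoly.eval r =
      (r - A 0 0) * ((r - A 1 1) * (r - A 2 2) - A 1 2 * A 2 1)
      - (- A 0 1) * ((- A 1 0) * (r - A 2 2) - (- A 1 2) * (- A 2 0))
      + (- A 0 2) * ((- A 1 0) * (- A 2 1) - (r - A 1 1) * (- A 2 0)) := by
  have : A.charpoly.eval r = ((A.charmatrix).map (evalRingHom r)).det := by
    rw [Matrix.charpoly, ← coe_evalRingHom, RingHom.map_det, RingHom.mapMatrix_apply]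
  rw [this, det_fin_three]
  simp [charmatrix_apply_eq, charmatrix_apply_ne, Fin.ne_of_val_ne]
  ring

theorem four_independent_lines_in_M0 :
    LinearIndependent ℝ
      ![(Matrix.diagonal ![1, 1, -2] : Matrix (Fin 3) (Fin 3) ℝ),
        Matrix.diagonal ![1, -2, 1],
        !![1, 0, 0; 0, -1/2, -3/2; 0, -3/2, -1/2],
        !![-1/2, 0, -3/2; 0, 1, 0; -3/2, 0, -1/2]] ∧
    ∀ t : ℝ,
      ∀ B ∈ ({Matrix.diagonal ![1, 1, -2],
              Matrix.diagonal ![1, -2, 1],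
              !![1, 0, 0; 0, -1/2, -3/2; 0, -3/2, -1/2],
              !![-1/2, 0, -3/2; 0, 1, 0; -3/2, 0, -1/2]} :
             Set (Matrix (Fin 3) (Fin 3) ℝ)),
        (t • B).trace = 0 ∧
        ∃ c : ℝ, (Polynomial.X - Polynomial.C c) ^ 2 ∣ (t • B).charpoly := by
  constructor
  · rw [Fintype.linearIndependent_iff]
    intro g h
    rw [Fin.sum_univ_four] at h
    simp only [Matrix.cons_val_zero, Matrix.cons_val_one, Matrix.head_cons,
      Matrix.cons_val_two, Matrix.tail_cons, Matrix.cons_val_three] at h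
    have e12 := congrFun (congrFun h 1) 2
    have e02 := congrFun (congrFun h 0) 2
    have e00 := congrFun (congrFun h 0) 0
    have e11 := congrFun (congrFun h 1) 1
    simp [Matrix.add_apply, Matrix.smul_apply, smul_eq_mul] at e12 e02 e00 e11
    have h2 : g 2 = 0 := by linarith
    have h3 : g 3 = 0 := by linarith
    have h0 : g 0 = 0 := by linarith
    have h1 : g 1 = 0 := by linarith
    intro i
    fin_cases i <;> assumption
  · intro t B hB
    simp only [Set.mem_insert_iff, Set.mem_singleton_iff] at hB
    have key : ∀ A : Matrix (Fin 3) (Fin 3) ℝ,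
        A 0 0 + A 1 1 + A 2 2 = 0 →
        (∀ r : ℝ, (t • A).charpoly.eval r = ((X - C t) ^ 2 * (X + C (2 * t))).eval r) →
        (t • A).trace = 0 ∧
        ∃ c : ℝ, (X - C c) ^ 2 ∣ (t • A).charpoly := by
      intro A htr hev
      refine ⟨?_, t, X + C (2 * t), Polynomial.funext hev⟩
      have : (t • A).trace = t * A 0 0 + t * A 1 1 + t * A 2 2 := by
        simp [Matrix.trace, Matrix.diag, Fin.sum_univ_three, Matrix.smul_apply, smul_eq_mul]
      rw [this]
      linear_combination t * htr
    rcases hB with rfl | rfl | rfl | rfl <;>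
      refine key _ (by norm_num [Matrix.cons_val_two, Matrix.tail_cons, Matrix.head_cons]) (fun r => ?_) <;>
      rw [eval_charpoly'] <;>
      simp [Matrix.smul_apply, smul_eq_mul] <;>
      ring
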